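/- Let G = (V, E) be a directed graph and {(Aᵢ, Gᵢ)}_{i ∈ [k]} a family of pairs of subsets of V (Streett pairs). Suppose that for each i ∈ [k] there is a function ρᵢ : V → ℕ such that for every edge (u, v) ∈ E at least one of the following holds: u ∈ Gᵢ; or u ∈ Aᵢ, u ∉ Gᵢ, and ρᵢ(u) > ρᵢ(v); or u ∉ Aᵢ ∪ Gᵢ and ρᵢ(u) ≥ ρᵢ(v). Then every infinite path π of G satisfies the Streett condition: for all i ∈ [k], if π visits Aᵢ infinitely often then π visits Gᵢ infinitely often. -/
import Mathlib


/-- Soundness of the Streett ranking construction: if for each Streett pair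
`(A i, G i)` there is a ranking function satisfying the edge conditions, then
every infinite path satisfies the Streett condition. -/
theorem streett_ranking_sound {V : Type} (E : V → V → Prop) (k : ℕ)
    (A G : Fin k → Set V)
    (h : ∀ i : Fin k, ∃ ρ : V → ℕ, ∀ u v, E u v →
      u ∈ G i ∨ (u ∈ A i ∧ u ∉ G i ∧ ρ v < ρ u) ∨ (u ∉ A i ∧ u ∉ G i ∧ ρ v ≤ ρ u)) :
    ∀ π : ℕ → V, (∀ n, E (π n) (π (n + 1))) →
      ∀ i : Fin k, {n | π n ∈ A i}.Infinite → {n | π n ∈ G i}.Infinite := by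
  intro π hπ i hA
  by_contra hG
  rw [Set.not_infinite] at hG
  obtain ⟨ρ, hρ⟩ := h i
  -- beyond some N, π never visits G i
  obtain ⟨N, hN⟩ : ∃ N, ∀ n, N ≤ n → π n ∉ G i := by
    rcases hG.bddAbove with ⟨M, hM⟩
    exact ⟨M + 1, fun n hn hmem => absurd (hM hmem) (by omega)⟩
  -- ranks are nonincreasing from N on
  have mono : ∀ n, N ≤ n → ∀ m, n ≤ m → ρ (π m) ≤ ρ (π n) := by
    intro n hn m hm
    induction m with
    | zero =>
      have : n = 0 := by omega
      subst this; rfl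
    | succ m ih =>
      rcases Nat.lt_or_ge n (m + 1) with hlt | hge
      · have hle : ρ (π (m + 1)) ≤ ρ (π m) := by
          rcases hρ (π m) (π (m + 1)) (hπ m) with hg | ⟨_, _, hlt'⟩ | ⟨_, _, hle'⟩
          · exact absurd hg (hN m (by omega))
          · omega
          · exact hle'
        exact le_trans hle (ih (by omega))
      · have : n = m + 1 := by omega
        subst this; rfl
  -- pick a minimal rank value attained at some index ≥ N
  have hS : (Set.range fun n : ℕ => ρ (π (N + n))).Nonempty := ⟨ρ (π N), 0, by simp⟩
  obtain ⟨c, ⟨m, hm⟩, hmin⟩ := Nat.lt_wfRel.wf.has_min _ hS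
  -- find an A-visit at or after N + m
  obtain ⟨a, haA, ha⟩ := hA.exists_gt (N + m)
  -- rank strictly drops at a
  have h1 : ρ (π a) ≤ c := hm ▸ mono (N + m) (by omega) a (le_of_lt ha)
  have h2 : ρ (π (a + 1)) < ρ (π a) := by
    rcases hρ (π a) (π (a + 1)) (hπ a) with hg | ⟨_, _, hlt'⟩ | ⟨haA', _, _⟩
    · exact absurd hg (hN a (by omega))
    · exact hlt'
    · exact absurd haA haA'
  refine hmin (ρ (π (a + 1))) ⟨a + 1 - N, ?_⟩ ?_
  · show ρ (π (N + (a + 1 - N))) = ρ (π (a + 1))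
    have hn : N + (a + 1 - N) = a + 1 := by omega
    rw [hn]
  · show ρ (π (a + 1)) < c
    omega
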